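/- Under τ-nice sampling, the ES condition holds with A = ((n−τ)/(τ(n−1)))·maxᵢ Lᵢ, B = n(τ−1)/(τ(n−1)), C = 2AΔ. -/

import Mathlib

open MeasureTheory ProbabilityTheory Finset Set
open scoped ENNReal RealInnerProductSpace

section ESaux

variable {E : Type*} [NormedAddCommGroup E] [InnerProductSpace ℝ E] [CompleteSpace E]

lemma es_descent_aux (f : E → ℝ) (L : ℝ)
    (hdiff : ∀ x, DifferentiableAt ℝ f x)
    (hlip : ∀ x y, ‖gradient f x - gradient f y‖ ≤ L * ‖x - y‖)
    (x y : E) :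
    f y ≤ f x + ⟪gradient f x, y - x⟫ + L / 2 * ‖y - x‖ ^ 2 := by
  set g := fun z => gradient f z with hg
  set v := y - x with hv
  have hc : ∀ t : ℝ, HasDerivAt (fun t : ℝ => x + t • v) v t := by
    intro t
    simpa using ((hasDerivAt_id t).smul_const v).const_add x
  have hgrad : ∀ z : E, HasFDerivAt f (InnerProductSpace.toDual ℝ E (g z)) z := fun z =>
    (hdiff z).hasGradientAt
  have hφ : ∀ t : ℝ, HasDerivAt (fun t : ℝ => f (x + t • v)) ⟪g (x + t • v), v⟫ t := by
    intro t
    have := (hgrad (x + t • v)).comp_hasDerivAt t (hc t)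
    simpa [Function.comp_def, InnerProductSpace.toDual_apply_apply] using this
  have hB : ∀ t : ℝ, HasDerivAt
      (fun t : ℝ => f x + t * ⟪g x, v⟫ + L / 2 * (t ^ 2 * ‖v‖ ^ 2))
      (⟪g x, v⟫ + L * t * ‖v‖ ^ 2) t := by
    intro t
    have h1 : HasDerivAt (fun t : ℝ => t * ⟪g x, v⟫) ⟪g x, v⟫ t :=
      hasDerivAt_mul_const _
    have h2 : HasDerivAt (fun t : ℝ => t ^ 2) (2 * t) t := by
      simpa using hasDerivAt_pow 2 t
    have h4 := (h1.const_add (f x)).add ((h2.mul_const (‖v‖ ^ 2)).const_mul (L / 2))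
    exact h4.congr_deriv (by ring)
  have key : ∀ t ∈ Icc (0:ℝ) 1,
      f (x + t • v) ≤ f x + t * ⟪g x, v⟫ + L / 2 * (t ^ 2 * ‖v‖ ^ 2) := by
    apply image_le_of_deriv_right_le_deriv_boundary
    · exact fun t _ => (hφ t).continuousAt.continuousWithinAt
    · exact fun t _ => (hφ t).hasDerivWithinAt
    · simp
    · exact fun t _ => (hB t).continuousAt.continuousWithinAt
    · exact fun t _ => (hB t).hasDerivWithinAt
    · intro t ht
      have h1 : ⟪g (x + t • v), v⟫ = ⟪g x, v⟫ + ⟪g (x + t • v) - g x, v⟫ := by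
        rw [inner_sub_left]; ring
      rw [h1]
      have h2 : ⟪g (x + t • v) - g x, v⟫ ≤ ‖g (x + t • v) - g x‖ * ‖v‖ :=
        real_inner_le_norm _ _
      have h3 : ‖g (x + t • v) - g x‖ ≤ L * (t * ‖v‖) := by
        have := hlip (x + t • v) x
        simpa [norm_smul, abs_of_nonneg ht.1, mul_assoc] using this
      have hv0 : (0:ℝ) ≤ ‖v‖ := norm_nonneg v
      nlinarith [mul_le_mul_of_nonneg_right h3 hv0]
  have := key 1 (by norm_num)
  have heq : f x + 1 * ⟪g x, v⟫ + L / 2 * (1 ^ 2 * ‖v‖ ^ 2)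
      = f x + ⟪g x, v⟫ + L / 2 * ‖v‖ ^ 2 := by ring
  rw [heq, one_smul, hv, add_sub_cancel] at this
  exact this

lemma es_grad_sq_aux (f : E → ℝ) (L : ℝ) (hL : 0 < L)
    (hdiff : ∀ x, DifferentiableAt ℝ f x)
    (hlip : ∀ x y, ‖gradient f x - gradient f y‖ ≤ L * ‖x - y‖)
    (flow : ℝ) (hbd : ∀ x, flow ≤ f x) (x : E) :
    ‖gradient f x‖ ^ 2 ≤ 2 * L * (f x - flow) := by
  set g := gradient f x with hgdef
  set c := ‖g‖ ^ 2 with hc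
  have hdesc := es_descent_aux f L hdiff hlip x (x - L⁻¹ • g)
  have hyx : (x - L⁻¹ • g) - x = -(L⁻¹ • g) := by abel
  rw [hyx] at hdesc
  have hinner : ⟪g, -(L⁻¹ • g)⟫ = -(L⁻¹ * c) := by
    rw [inner_neg_right, real_inner_smul_right, real_inner_self_eq_norm_sq]
  have hnorm : ‖-(L⁻¹ • g)‖ ^ 2 = L⁻¹ ^ 2 * c := by
    rw [norm_neg, norm_smul, mul_pow]
    congr 1
    rw [Real.norm_eq_abs, sq_abs]
  rw [hinner, hnorm] at hdesc
  have h1 := hbd (x - L⁻¹ • g)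
  have h2 : L / 2 * (L⁻¹ ^ 2 * c) = (2 * L)⁻¹ * c := by
    field_simp
  have h3 : L⁻¹ * c = 2 * ((2 * L)⁻¹ * c) := by
    field_simp
  rw [h2] at hdesc
  have h4 : (2 * L)⁻¹ * c ≤ f x - flow := by linarith
  have h5 := mul_le_mul_of_nonneg_left h4 (by positivity : (0:ℝ) ≤ 2 * L)
  have h6 : (2 * L) * ((2 * L)⁻¹ * c) = c := by
    field_simp
  linarith [h5, h6.symm.le]

lemma es_card_filter_subset_powersetCard {α : Type*} [DecidableEq α] (u s : Finset α)
    (hsu : s ⊆ u) (k : ℕ) (hk : s.card ≤ k) :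
    ((Finset.powersetCard k u).filter (fun A => s ⊆ A)).card
      = (u.card - s.card).choose (k - s.card) := by
  rw [← Finset.card_sdiff_of_subset hsu, ← Finset.card_powersetCard (k - #s) (u \ s)]
  apply Finset.card_bij' (fun A _ => A \ s) (fun B _ => B ∪ s)
  · intro A hA
    simp only [mem_filter, Finset.mem_powersetCard] at hA
    obtain ⟨⟨hAu, hAc⟩, hsA⟩ := hA
    rw [Finset.mem_powersetCard]
    exact ⟨Finset.sdiff_subset_sdiff hAu Finset.Subset.rfl,
      by rw [Finset.card_sdiff_of_subset hsA, hAc]⟩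
  · intro B hB
    rw [Finset.mem_powersetCard] at hB
    obtain ⟨hBu, hBc⟩ := hB
    have hdisj : Disjoint B s := Finset.disjoint_of_subset_left hBu Finset.sdiff_disjoint
    simp only [mem_filter, Finset.mem_powersetCard]
    refine ⟨⟨?_, ?_⟩, Finset.subset_union_right⟩
    · exact Finset.union_subset (hBu.trans Finset.sdiff_subset) hsu
    · rw [Finset.card_union_of_disjoint hdisj, hBc]
      omega
  · intro A hA
    simp only [mem_filter] at hA
    exact Finset.sdiff_union_of_subset hA.2
  · intro B hB
    rw [Finset.mem_powersetCard] at hB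
    have hdisj : Disjoint B s := Finset.disjoint_of_subset_left hB.1 Finset.sdiff_disjoint
    exact Finset.union_sdiff_cancel_right hdisj

lemma es_count_diag {n τ : ℕ} (hτ1 : 1 ≤ τ) (i : Fin n) :
    ((Finset.powersetCard τ (univ : Finset (Fin n))).filter
      (fun A => i ∈ A ∧ i ∈ A)).card = (n - 1).choose (τ - 1) := by
  have h1 : ((Finset.powersetCard τ (univ : Finset (Fin n))).filter
      (fun A => i ∈ A ∧ i ∈ A)) = ((Finset.powersetCard τ (univ : Finset (Fin n))).filter
      (fun A => {i} ⊆ A)) := by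
    apply Finset.filter_congr
    intro A _
    simp
  rw [h1, es_card_filter_subset_powersetCard _ _ (Finset.subset_univ _) _ (by simpa using hτ1)]
  simp

lemma es_count_off {n τ : ℕ} (hτ1 : 1 ≤ τ) {i j : Fin n} (hij : i ≠ j) :
    ((Finset.powersetCard τ (univ : Finset (Fin n))).filter
      (fun A => i ∈ A ∧ j ∈ A)).card
      = if 2 ≤ τ then (n - 2).choose (τ - 2) else 0 := by
  by_cases h2 : 2 ≤ τ
  · rw [if_pos h2]
    have h1 : ((Finset.powersetCard τ (univ : Finset (Fin n))).filter
        (fun A => i ∈ A ∧ j ∈ A)) = ((Finset.powersetCard τ (univ : Finset (Fin n))).filter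
        (fun A => ({i, j} : Finset (Fin n)) ⊆ A)) := by
      apply Finset.filter_congr
      intro A _
      simp [Finset.insert_subset_iff]
    have hc : ({i, j} : Finset (Fin n)).card = 2 := Finset.card_pair hij
    rw [h1, es_card_filter_subset_powersetCard _ _ (Finset.subset_univ _) _ (by omega), hc]
    simp
  · rw [if_neg h2]
    have hτ : τ = 1 := by omega
    rw [Finset.card_eq_zero, Finset.filter_eq_empty_iff]
    intro A hA
    rw [Finset.mem_powersetCard] at hA
    rintro ⟨hi, hj⟩
    have hss : ({i, j} : Finset (Fin n)) ⊆ A := by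
      simp [Finset.insert_subset_iff, hi, hj]
    have := Finset.card_le_card hss
    rw [Finset.card_pair hij, hA.2, hτ] at this
    omega

lemma es_nat_id1 {n τ : ℕ} (hτ1 : 1 ≤ τ) (hτn : τ ≤ n) :
    (n - 1).choose (τ - 1) * n = τ * n.choose τ := by
  obtain ⟨m, rfl⟩ : ∃ m, n = m + 1 := ⟨n - 1, by omega⟩
  obtain ⟨t, rfl⟩ : ∃ t, τ = t + 1 := ⟨τ - 1, by omega⟩
  have h := Nat.add_one_mul_choose_eq m t
  simp only [Nat.succ_eq_add_one, Nat.add_sub_cancel]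
  rw [mul_comm, h, mul_comm]

lemma es_nat_id2 {n τ : ℕ} (hτ2 : 2 ≤ τ) (hτn : τ ≤ n) :
    (n - 2).choose (τ - 2) * (n - 1) = (τ - 1) * (n - 1).choose (τ - 1) := by
  obtain ⟨m, rfl⟩ : ∃ m, n = m + 2 := ⟨n - 2, by omega⟩
  obtain ⟨t, rfl⟩ : ∃ t, τ = t + 2 := ⟨τ - 2, by omega⟩
  have h := es_nat_id1 (n := m + 1) (τ := t + 1) (by omega) (by omega)
  simp only [Nat.add_sub_cancel] at h
  have e1 : m + 2 - 2 = m := by omega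
  have e2 : t + 2 - 2 = t := by omega
  have e3 : m + 2 - 1 = m + 1 := by omega
  have e4 : t + 2 - 1 = t + 1 := by omega
  rw [e1, e2, e3, e4, h]

lemma es_sum_sq_identity {n τ : ℕ} (hτ1 : 1 ≤ τ) (a : Fin n → E) :
    ∑ A ∈ Finset.powersetCard τ (univ : Finset (Fin n)), ‖∑ i ∈ A, a i‖ ^ 2
      = (((n - 1).choose (τ - 1) : ℝ)
          - ((if 2 ≤ τ then (n - 2).choose (τ - 2) else 0 : ℕ) : ℝ)) * ∑ i, ‖a i‖ ^ 2
        + ((if 2 ≤ τ then (n - 2).choose (τ - 2) else 0 : ℕ) : ℝ) * ‖∑ i, a i‖ ^ 2 := by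
  classical
  set c2 : ℕ := if 2 ≤ τ then (n - 2).choose (τ - 2) else 0 with hc2def
  set 𝒜 := Finset.powersetCard τ (univ : Finset (Fin n)) with h𝒜
  have step1 : ∀ A : Finset (Fin n), ‖∑ i ∈ A, a i‖ ^ 2
      = ∑ i, ∑ j, (if i ∈ A ∧ j ∈ A then ⟪a i, a j⟫ else 0) := by
    intro A
    have hrow : ∀ i : Fin n, (∑ j, if i ∈ A ∧ j ∈ A then ⟪a i, a j⟫ else 0)
        = if i ∈ A then ⟪a i, ∑ j ∈ A, a j⟫ else 0 := by
      intro i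
      by_cases hi : i ∈ A
      · simp only [hi, true_and, inner_sum, if_pos]
        rw [Finset.sum_ite_mem, Finset.univ_inter]
      · simp [hi]
    rw [Finset.sum_congr rfl (fun i _ => hrow i), Finset.sum_ite_mem, Finset.univ_inter,
      ← sum_inner, real_inner_self_eq_norm_sq]
  rw [Finset.sum_congr rfl (fun A _ => step1 A)]
  rw [Finset.sum_comm]
  rw [Finset.sum_congr rfl (fun i (_ : i ∈ Finset.univ) => Finset.sum_comm (s := 𝒜) (t := univ))]
  have step2 : ∀ i j : Fin n, (∑ A ∈ 𝒜, if i ∈ A ∧ j ∈ A then ⟪a i, a j⟫ else 0)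
      = (c2 : ℝ) * ⟪a i, a j⟫
        + if i = j then (((n - 1).choose (τ - 1) : ℝ) - (c2 : ℝ)) * ⟪a i, a j⟫ else 0 := by
    intro i j
    rw [← Finset.sum_filter, Finset.sum_const, nsmul_eq_mul]
    by_cases hij : i = j
    · subst hij
      rw [es_count_diag hτ1 i, if_pos rfl]
      ring
    · rw [es_count_off hτ1 hij, if_neg hij, ← hc2def, add_zero]
  rw [Finset.sum_congr rfl (fun i _ => Finset.sum_congr rfl (fun j _ => step2 i j))]
  have step3 : ∀ i : Fin n,
      (∑ j, ((c2 : ℝ) * ⟪a i, a j⟫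
        + if i = j then (((n - 1).choose (τ - 1) : ℝ) - (c2 : ℝ)) * ⟪a i, a j⟫ else 0))
      = (c2 : ℝ) * ⟪a i, ∑ j, a j⟫
        + (((n - 1).choose (τ - 1) : ℝ) - (c2 : ℝ)) * ‖a i‖ ^ 2 := by
    intro i
    rw [Finset.sum_add_distrib, ← Finset.mul_sum, ← inner_sum]
    congr 1
    rw [Finset.sum_ite_eq, if_pos (Finset.mem_univ i), real_inner_self_eq_norm_sq]
  rw [Finset.sum_congr rfl (fun i _ => step3 i), Finset.sum_add_distrib,
    ← Finset.mul_sum, ← Finset.mul_sum, ← sum_inner, real_inner_self_eq_norm_sq]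
  ring

end ESaux
set_option maxHeartbeats 1000000 in
theorem es_tau_nice_sampling {Ω : Type*} [MeasureSpace Ω]
    [IsProbabilityMeasure (ℙ : Measure Ω)] {d n : ℕ} (hn : 2 ≤ n)
    (τ : ℕ) (hτ1 : 1 ≤ τ) (hτn : τ ≤ n)
    (f : Fin n → EuclideanSpace ℝ (Fin d) → ℝ)
    (L : Fin n → ℝ) (hL : ∀ i, 0 < L i)
    (hdiff : ∀ i x, DifferentiableAt ℝ (f i) x)
    (hlip : ∀ i x y, ‖gradient (f i) x - gradient (f i) y‖ ≤ L i * ‖x - y‖)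
    (finf : Fin n → ℝ) (hbound : ∀ i x, finf i ≤ f i x)
    (F : EuclideanSpace ℝ (Fin d) → ℝ) (hF : ∀ x, F x = (n : ℝ)⁻¹ * ∑ i, f i x)
    (fstar : ℝ) (hfstar : ∀ x, fstar ≤ F x)
    (S : Ω → Finset (Fin n))
    (hmeas : ∀ A : Finset (Fin n), MeasurableSet {ω | S ω = A})
    (hdist : ∀ A : Finset (Fin n),
      ℙ {ω | S ω = A} = if A.card = τ then (n.choose τ : ℝ≥0∞)⁻¹ else 0)
    (v : Fin n → Ω → ℝ)
    (hv : ∀ i ω, v i ω = (n / τ : ℝ) * (if i ∈ S ω then 1 else 0))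
    (Δ A B C : ℝ)
    (hΔ : Δ = (n : ℝ)⁻¹ * ∑ i, (fstar - finf i))
    (hA : A = ((n - τ : ℝ) / (τ * (n - 1))) * Finset.univ.sup'
      (Finset.univ_nonempty_iff.mpr ⟨⟨0, by omega⟩⟩)
      (fun i : Fin n => L i))
    (hB : B = (n : ℝ) * (τ - 1) / (τ * (n - 1)))
    (hC : C = 2 * A * Δ) :
    ∀ x, ∫ ω, ‖(n : ℝ)⁻¹ • ∑ i, v i ω • gradient (f i) x‖ ^ 2 ≤
      2 * A * (F x - fstar) + B * ‖gradient F x‖ ^ 2 + C := by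
  intro x
  classical
  obtain ⟨Lmax, hALmax, hLmax_ge⟩ :
      ∃ Lm : ℝ, A = ((n - τ : ℝ) / (τ * (n - 1))) * Lm ∧ ∀ i, L i ≤ Lm :=
    ⟨_, hA, fun i => Finset.le_sup' _ (Finset.mem_univ i)⟩
  have hn0 : (0:ℝ) < n := by exact_mod_cast (by omega : 0 < n)
  have hn1 : (1:ℝ) < n := by exact_mod_cast (by omega : 1 < n)
  have hτ0 : (0:ℝ) < τ := by exact_mod_cast hτ1
  have hτr : (τ:ℝ) ≤ n := by exact_mod_cast hτn
  have hchn : 0 < n.choose τ := Nat.choose_pos hτn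
  have hch0 : (0:ℝ) < (n.choose τ : ℝ) := by exact_mod_cast hchn
  have hn1' : (0:ℝ) < (n:ℝ) - 1 := by linarith
  set a : Fin n → EuclideanSpace ℝ (Fin d) := fun i => gradient (f i) x with ha
  -- Step 1: rewrite the integrand
  have hint : ∀ ω, ((n : ℝ)⁻¹ • ∑ i, v i ω • gradient (f i) x)
      = (τ:ℝ)⁻¹ • ∑ i ∈ S ω, a i := by
    intro ω
    have h1 : ∀ i : Fin n, v i ω • gradient (f i) x
        = if i ∈ S ω then ((n : ℝ)/τ) • a i else 0 := by
      intro i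
      rw [hv]
      by_cases h : i ∈ S ω <;> simp [h, ha]
    rw [Finset.sum_congr rfl (fun i _ => h1 i), Finset.sum_ite_mem, Finset.univ_inter,
      ← Finset.smul_sum, smul_smul]
    congr 1
    field_simp
  set G : Finset (Fin n) → ℝ := fun A' => ‖(τ:ℝ)⁻¹ • ∑ i ∈ A', a i‖ ^ 2 with hG
  have hGfun : (fun ω => ‖(n : ℝ)⁻¹ • ∑ i, v i ω • gradient (f i) x‖ ^ 2)
      = fun ω => G (S ω) := by
    funext ω
    rw [hG]
    simp only
    rw [hint ω]
  -- Step 2: compute the expectation as a finite sum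
  have hrepr : ∀ ω : Ω, G (S ω)
      = ∑ A' : Finset (Fin n), Set.indicator {ω' | S ω' = A'} (fun _ => G A') ω := by
    intro ω
    rw [Finset.sum_eq_single (S ω)]
    · exact (Set.indicator_of_mem rfl _).symm
    · intro A' _ hA'
      rw [Set.indicator_of_notMem]
      exact fun h => hA' h.symm
    · exact fun h => absurd (Finset.mem_univ _) h
  have hintg : ∀ A' : Finset (Fin n),
      Integrable (fun ω => Set.indicator {ω' | S ω' = A'} (fun _ => G A') ω) ℙ :=
    fun A' => (integrable_const (G A')).indicator (hmeas A')
  have hsplit : ∫ ω, G (S ω)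
      = ∑ A' : Finset (Fin n), (ℙ {ω' | S ω' = A'}).toReal * G A' := by
    calc ∫ ω, G (S ω)
        = ∫ ω, ∑ A' : Finset (Fin n), Set.indicator {ω' | S ω' = A'} (fun _ => G A') ω := by
          rw [funext hrepr]
      _ = ∑ A' : Finset (Fin n), ∫ ω, Set.indicator {ω' | S ω' = A'} (fun _ => G A') ω :=
          integral_finset_sum _ (fun A' _ => hintg A')
      _ = ∑ A' : Finset (Fin n), (ℙ {ω' | S ω' = A'}).toReal * G A' := by
          refine Finset.sum_congr rfl (fun A' _ => ?_)
          rw [integral_indicator_const (G A') (hmeas A'), smul_eq_mul, measureReal_def]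
  have hP : ∀ A' : Finset (Fin n), (ℙ {ω' | S ω' = A'}).toReal
      = if A'.card = τ then ((n.choose τ : ℝ))⁻¹ else 0 := by
    intro A'
    rw [hdist A']
    split
    · rw [ENNReal.toReal_inv]
      simp
    · simp
  have hval : ∑ A' : Finset (Fin n), (if A'.card = τ then ((n.choose τ : ℝ))⁻¹ else 0) * G A'
      = ((n.choose τ : ℝ))⁻¹ * ∑ A' ∈ Finset.powersetCard τ (Finset.univ : Finset (Fin n)), G A' := by
    rw [Finset.powersetCard_eq_filter, Finset.powerset_univ, Finset.mul_sum, Finset.sum_filter]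
    exact Finset.sum_congr rfl (fun A' _ => by by_cases h : A'.card = τ <;> simp [h])
  have hGval : ∀ A' : Finset (Fin n), G A' = (τ:ℝ)⁻¹ ^ 2 * ‖∑ i ∈ A', a i‖ ^ 2 := by
    intro A'
    rw [hG]
    simp only [norm_smul, mul_pow]
    congr 1
    rw [Real.norm_eq_abs, sq_abs]
  -- gradient of F
  have hid_toDual : ∀ i : Fin n,
      InnerProductSpace.toDual ℝ (EuclideanSpace ℝ (Fin d)) (a i) = fderiv ℝ (f i) x :=
    fun i => (InnerProductSpace.toDual ℝ (EuclideanSpace ℝ (Fin d))).apply_symm_apply _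
  have hgradF : gradient F x = (n:ℝ)⁻¹ • ∑ i, a i := by
    have hFeq : F = fun y => (n:ℝ)⁻¹ * ∑ i, f i y := funext hF
    have hsumd : HasFDerivAt (fun y => ∑ i, f i y) (∑ i, fderiv ℝ (f i) x) x :=
      HasFDerivAt.fun_sum (fun i _ => (hdiff i x).hasFDerivAt)
    have hFd : HasFDerivAt F ((n:ℝ)⁻¹ • ∑ i, fderiv ℝ (f i) x) x := by
      rw [hFeq]
      exact hsumd.const_mul _
    have hg := hasFDerivAt_iff_hasGradientAt.mp hFd
    rw [hg.gradient, _root_.map_smul, map_sum]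
    rfl
  have hsum_a : ∑ i, a i = (n:ℝ) • gradient F x := by
    rw [hgradF, smul_smul, mul_inv_cancel₀ (ne_of_gt hn0), one_smul]
  have hnormF : ‖∑ i, a i‖ ^ 2 = (n:ℝ)^2 * ‖gradient F x‖ ^ 2 := by
    rw [hsum_a, norm_smul, mul_pow, Real.norm_eq_abs, sq_abs]
  -- main identity for the expectation
  have hmain : (∫ ω, ‖(n : ℝ)⁻¹ • ∑ i, v i ω • gradient (f i) x‖ ^ 2)
      = ((n.choose τ : ℝ))⁻¹ * ((τ:ℝ)⁻¹ ^ 2 *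
        (((((n - 1).choose (τ - 1) : ℕ) : ℝ)
            - ((if 2 ≤ τ then (n - 2).choose (τ - 2) else 0 : ℕ) : ℝ)) * ∑ i, ‖a i‖ ^ 2
          + ((if 2 ≤ τ then (n - 2).choose (τ - 2) else 0 : ℕ) : ℝ)
            * ((n:ℝ)^2 * ‖gradient F x‖ ^ 2))) := by
    calc (∫ ω, ‖(n : ℝ)⁻¹ • ∑ i, v i ω • gradient (f i) x‖ ^ 2)
        = ∫ ω, G (S ω) := by rw [hGfun]
      _ = ∑ A' : Finset (Fin n), (ℙ {ω' | S ω' = A'}).toReal * G A' := hsplit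
      _ = ∑ A' : Finset (Fin n), (if A'.card = τ then ((n.choose τ : ℝ))⁻¹ else 0) * G A' := by
          exact Finset.sum_congr rfl (fun A' _ => by rw [hP A'])
      _ = ((n.choose τ : ℝ))⁻¹
            * ∑ A' ∈ Finset.powersetCard τ (Finset.univ : Finset (Fin n)), G A' := hval
      _ = ((n.choose τ : ℝ))⁻¹ * ((τ:ℝ)⁻¹ ^ 2
            * ∑ A' ∈ Finset.powersetCard τ (Finset.univ : Finset (Fin n)),
                ‖∑ i ∈ A', a i‖ ^ 2) := by
          rw [Finset.sum_congr rfl (fun A' _ => hGval A'), ← Finset.mul_sum]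
      _ = _ := by
          rw [es_sum_sq_identity hτ1 a, hnormF]
  rw [hmain]
  -- cast identities
  have hid1 : (((n - 1).choose (τ - 1) : ℕ) : ℝ) * n = (τ:ℝ) * (n.choose τ : ℝ) := by
    exact_mod_cast es_nat_id1 hτ1 hτn
  have hid2 : ((if 2 ≤ τ then (n - 2).choose (τ - 2) else 0 : ℕ) : ℝ)
      * ((n:ℝ) * ((n:ℝ) - 1)) = (τ:ℝ) * ((τ:ℝ) - 1) * (n.choose τ : ℝ) := by
    by_cases h2 : 2 ≤ τ
    · rw [if_pos h2]
      have h' : (((n-2).choose (τ-2) : ℕ) : ℝ) * (((n - 1 : ℕ)) : ℝ)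
          = (((τ - 1 : ℕ)) : ℝ) * (((n-1).choose (τ-1) : ℕ) : ℝ) := by
        exact_mod_cast es_nat_id2 h2 hτn
      rw [Nat.cast_sub (by omega : 1 ≤ n), Nat.cast_sub hτ1, Nat.cast_one] at h'
      linear_combination (n:ℝ) * h' + ((τ:ℝ) - 1) * hid1
    · rw [if_neg h2]
      have hτe : (τ:ℝ) = 1 := by exact_mod_cast (by omega : τ = 1)
      rw [hτe]
      norm_num
  -- coefficient computations
  have hN1v : (((n - 1).choose (τ - 1) : ℕ) : ℝ) = (τ:ℝ) * (n.choose τ : ℝ) / n := by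
    field_simp
    linarith [hid1]
  have hc2v : ((if 2 ≤ τ then (n - 2).choose (τ - 2) else 0 : ℕ) : ℝ)
      = (τ:ℝ) * ((τ:ℝ) - 1) * (n.choose τ : ℝ) / ((n:ℝ) * ((n:ℝ) - 1)) := by
    rw [eq_div_iff (by positivity)]
    linarith [hid2]
  have hcoefN : ((n.choose τ : ℝ))⁻¹ * ((τ:ℝ)⁻¹ ^ 2
      * ((((n - 1).choose (τ - 1) : ℕ) : ℝ)
          - ((if 2 ≤ τ then (n - 2).choose (τ - 2) else 0 : ℕ) : ℝ)))
      = ((n:ℝ) - τ) / ((τ:ℝ) * (n:ℝ) * ((n:ℝ)-1)) := by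
    rw [hN1v, hc2v]
    field_simp
    ring
  have hcoefB : ((n.choose τ : ℝ))⁻¹ * ((τ:ℝ)⁻¹ ^ 2
      * (((if 2 ≤ τ then (n - 2).choose (τ - 2) else 0 : ℕ) : ℝ) * (n:ℝ)^2)) = B := by
    rw [hc2v, hB]
    field_simp
  -- bound on the sum of squared gradient norms
  have hLmax_pos : (0:ℝ) < Lmax := lt_of_lt_of_le (hL ⟨0, by omega⟩) (hLmax_ge _)
  have hgsq : ∀ i : Fin n, ‖a i‖ ^ 2 ≤ 2 * Lmax * (f i x - finf i) := by
    intro i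
    have h1 := es_grad_sq_aux (f i) (L i) (hL i) (hdiff i) (hlip i) (finf i)
      (fun y => hbound i y) x
    have h2 : (0:ℝ) ≤ f i x - finf i := by linarith [hbound i x]
    have h3 : L i ≤ Lmax := hLmax_ge i
    calc ‖a i‖ ^ 2 ≤ 2 * L i * (f i x - finf i) := h1
      _ ≤ 2 * Lmax * (f i x - finf i) := by nlinarith
  have hSa : ∑ i, ‖a i‖ ^ 2 ≤ 2 * Lmax * ((n:ℝ) * (F x - fstar + Δ)) := by
    have h1 : ∑ i, ‖a i‖ ^ 2 ≤ ∑ i, 2 * Lmax * (f i x - finf i) :=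
      Finset.sum_le_sum (fun i _ => hgsq i)
    have e1 : ∑ i, f i x = (n:ℝ) * F x := by
      rw [hF x]
      field_simp
    have e2 : ∑ i, (fstar - finf i) = (n:ℝ) * Δ := by
      rw [hΔ]
      field_simp
    have e3 : ∑ i : Fin n, (fstar - finf i) = (n:ℝ) * fstar - ∑ i, finf i := by
      rw [Finset.sum_sub_distrib, Finset.sum_const, Finset.card_univ, Fintype.card_fin,
        nsmul_eq_mul]
    have e4 : ∑ i : Fin n, (2 * Lmax * (f i x - finf i))
        = 2 * Lmax * (∑ i, f i x - ∑ i, finf i) := by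
      rw [← Finset.mul_sum, Finset.sum_sub_distrib]
    have e5 : ∑ i, finf i = (n:ℝ) * fstar - (n:ℝ) * Δ := by linarith
    rw [e4, e1, e5] at h1
    have e6 : 2 * Lmax * ((n:ℝ) * F x - ((n:ℝ) * fstar - (n:ℝ) * Δ))
        = 2 * Lmax * ((n:ℝ) * (F x - fstar + Δ)) := by ring
    linarith
  -- final assembly
  have hden : (0:ℝ) < (τ:ℝ) * (n:ℝ) * ((n:ℝ)-1) := by positivity
  have hcoef_nonneg : (0:ℝ) ≤ ((n:ℝ) - τ) / ((τ:ℝ) * (n:ℝ) * ((n:ℝ)-1)) :=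
    div_nonneg (by linarith) hden.le
  calc ((n.choose τ : ℝ))⁻¹ * ((τ:ℝ)⁻¹ ^ 2 *
        (((((n - 1).choose (τ - 1) : ℕ) : ℝ)
            - ((if 2 ≤ τ then (n - 2).choose (τ - 2) else 0 : ℕ) : ℝ)) * ∑ i, ‖a i‖ ^ 2
          + ((if 2 ≤ τ then (n - 2).choose (τ - 2) else 0 : ℕ) : ℝ)
            * ((n:ℝ)^2 * ‖gradient F x‖ ^ 2)))
      = (((n.choose τ : ℝ))⁻¹ * ((τ:ℝ)⁻¹ ^ 2
          * ((((n - 1).choose (τ - 1) : ℕ) : ℝ)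
              - ((if 2 ≤ τ then (n - 2).choose (τ - 2) else 0 : ℕ) : ℝ)))) * (∑ i, ‖a i‖ ^ 2)
        + (((n.choose τ : ℝ))⁻¹ * ((τ:ℝ)⁻¹ ^ 2
          * (((if 2 ≤ τ then (n - 2).choose (τ - 2) else 0 : ℕ) : ℝ) * (n:ℝ)^2)))
            * ‖gradient F x‖ ^ 2 := by ring
    _ = (((n:ℝ) - τ) / ((τ:ℝ) * (n:ℝ) * ((n:ℝ)-1))) * (∑ i, ‖a i‖ ^ 2)
        + B * ‖gradient F x‖ ^ 2 := by rw [hcoefN, hcoefB]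
    _ ≤ (((n:ℝ) - τ) / ((τ:ℝ) * (n:ℝ) * ((n:ℝ)-1)))
          * (2 * Lmax * ((n:ℝ) * (F x - fstar + Δ)))
        + B * ‖gradient F x‖ ^ 2 := by
        have := mul_le_mul_of_nonneg_left hSa hcoef_nonneg
        linarith
    _ = 2 * A * (F x - fstar) + B * ‖gradient F x‖ ^ 2 + C := by
        rw [hC, hALmax]
        field_simp
        ring
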